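/- arXiv:1707.01141 — 3 statements merged into one kernel-verified Lean document; each statement's English description precedes it below -/
import Mathlib

section
/- Fix w∈A_∞(ℬ). If there exist 0<q₀<p₀<∞ with q₀≤1 such that X_w(ℬ,Λ) satisfies the p-power John-Nirenberg property on the interval [q₀,p₀], then X_w(ℬ,Λ) also satisfies the p-power John-Nirenberg property on the interval (0,p₀]. -/
open MeasureTheory ENNReal Set

noncomputable section

namespace JNW

variable {Y : Type*} [MeasurableSpace Y] {F : Type*}

/-- The Hölder conjugate exponent `p' = p/(p-1)`. -/
def conj (p : ℝ) : ℝ := p / (p - 1)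

/-- The average `(1/μ(B)) ∫_B g dμ` of an `ℝ≥0∞`-valued function over a set. -/
def lavg (μ : Measure Y) (B : Set Y) (g : Y → ℝ≥0∞) : ℝ≥0∞ :=
  (∫⁻ x in B, g x ∂μ) / μ B

/-- The Muckenhoupt `A_p` characteristic of a weight `w` relative to the basis `ℬ`:
`[w]_{A_p} = sup_{B ∈ ℬ} ((1/μ(B))∫_B w dμ) ((1/μ(B))∫_B w^{-p'/p} dμ)^{p/p'}`. -/
def apConst (μ : Measure Y) (ℬ : Set (Set Y)) (p : ℝ) (w : Y → ℝ≥0∞) : ℝ≥0∞ :=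
  ⨆ B ∈ ℬ, lavg μ B w * (lavg μ B fun x => w x ^ (-(conj p / p))) ^ (p / conj p)

/-- Membership in the Muckenhoupt class `A_p(ℬ)`: a nonnegative, locally `μ`-integrable
(measurable) function with finite `A_p` characteristic. -/
def MemAp (μ : Measure Y) (ℬ : Set (Set Y)) (p : ℝ) (w : Y → ℝ≥0∞) : Prop :=
  Measurable w ∧ (∀ B ∈ ℬ, ∫⁻ x in B, w x ∂μ < ⊤) ∧ apConst μ ℬ p w < ⊤

/-- `A_∞(ℬ)` is the union of the classes `A_p(ℬ)` over `1 < p < ∞`. -/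
def MemAinfty (μ : Measure Y) (ℬ : Set (Set Y)) (w : Y → ℝ≥0∞) : Prop :=
  ∃ p : ℝ, 1 < p ∧ MemAp μ ℬ p w

/-- The reverse Hölder characteristic `[w]_{RH_δ}`: the least constant `C` with
`((1/μ(B))∫_B w^δ dμ)^{1/δ} ≤ C (1/μ(B))∫_B w dμ` for all `B ∈ ℬ`. -/
def rhConst (μ : Measure Y) (ℬ : Set (Set Y)) (δ : ℝ) (w : Y → ℝ≥0∞) : ℝ≥0∞ :=
  ⨆ B ∈ ℬ, (lavg μ B fun x => w x ^ δ) ^ (1 / δ) / lavg μ B w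

/-- Membership in the reverse Hölder class `RH_δ(ℬ)`. -/
def MemRH (μ : Measure Y) (ℬ : Set (Set Y)) (δ : ℝ) (w : Y → ℝ≥0∞) : Prop :=
  Measurable w ∧ (∀ B ∈ ℬ, ∫⁻ x in B, w x ∂μ < ⊤) ∧ rhConst μ ℬ δ w < ⊤

/-- The weight identically equal to one. -/
def wone : Y → ℝ≥0∞ := fun _ => 1

/-- `‖f‖_{X_w^p} = (sup_{B∈ℬ} (1/w(B)) ∫_B Λ(f,B)(x)^p w(x) dμ(x))^(1/p)`. -/
def xNorm (μ : Measure Y) (ℬ : Set (Set Y)) (Λ : F → Set Y → Y → ℝ≥0∞)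
    (w : Y → ℝ≥0∞) (p : ℝ) (f : F) : ℝ≥0∞ :=
  (⨆ B ∈ ℬ, (∫⁻ x in B, Λ f B x ^ p * w x ∂μ) / ∫⁻ x in B, w x ∂μ) ^ (1 / p)

/-- The `p`-power John–Nirenberg property of `X_w(ℬ,Λ)` on an interval `I ⊆ (0,∞)`:
for all `p < q` in `I` there is a finite constant `C` with `‖f‖_{X_w^q} ≤ C ‖f‖_{X_w^p}`
for every `f ∈ X_w(ℬ,Λ)`. -/
def JNprop (μ : Measure Y) (ℬ : Set (Set Y)) (Λ : F → Set Y → Y → ℝ≥0∞)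
    (w : Y → ℝ≥0∞) (I : Set ℝ) : Prop :=
  ∀ p ∈ I, ∀ q ∈ I, p < q → ∃ C : ℝ≥0∞, C < ⊤ ∧
    ∀ f : F, xNorm μ ℬ Λ w 1 f < ⊤ → xNorm μ ℬ Λ w q f ≤ C * xNorm μ ℬ Λ w p f

/-- `c_{p,q}(w)`: the least constant `C` with `‖f‖_{X_w^q} ≤ C ‖f‖_{X_w^p}` for all
`f ∈ X_w(ℬ,Λ)`. -/
def cConst (μ : Measure Y) (ℬ : Set (Set Y)) (Λ : F → Set Y → Y → ℝ≥0∞)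
    (w : Y → ℝ≥0∞) (p q : ℝ) : ℝ≥0∞ :=
  sInf {C : ℝ≥0∞ |
    ∀ f : F, xNorm μ ℬ Λ w 1 f < ⊤ → xNorm μ ℬ Λ w q f ≤ C * xNorm μ ℬ Λ w p f}

/-- `b_{w,v}`: the least constant `C` with `‖f‖_{X_v} ≤ C ‖f‖_{X_w}` for all
`f ∈ X_w(ℬ,Λ)`. -/
def bConst (μ : Measure Y) (ℬ : Set (Set Y)) (Λ : F → Set Y → Y → ℝ≥0∞)
    (w v : Y → ℝ≥0∞) : ℝ≥0∞ :=
  sInf {C : ℝ≥0∞ |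
    ∀ f : F, xNorm μ ℬ Λ w 1 f < ⊤ → xNorm μ ℬ Λ v 1 f ≤ C * xNorm μ ℬ Λ w 1 f}

/-- The weight invariance property of `X(ℬ,Λ)` for a class `𝒲` of weights:
`X_w(ℬ,Λ) = X_v(ℬ,Λ)` as sets for all `w, v ∈ 𝒲`, with a finite comparison constant. -/
def WeightInv (μ : Measure Y) (ℬ : Set (Set Y)) (Λ : F → Set Y → Y → ℝ≥0∞)
    (𝒲 : Set (Y → ℝ≥0∞)) : Prop :=
  ∀ w ∈ 𝒲, ∀ v ∈ 𝒲,
    ({f : F | xNorm μ ℬ Λ w 1 f < ⊤} = {f : F | xNorm μ ℬ Λ v 1 f < ⊤}) ∧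
    ∃ C : ℝ≥0∞, C < ⊤ ∧
      ∀ f : F, xNorm μ ℬ Λ w 1 f < ⊤ → xNorm μ ℬ Λ v 1 f ≤ C * xNorm μ ℬ Λ w 1 f

/-- `Ψ_p(t) = sup { b_{1,v} : v ∈ A_p(ℬ), [v]_{A_p} ≤ t }`. -/
def psi (μ : Measure Y) (ℬ : Set (Set Y)) (Λ : F → Set Y → Y → ℝ≥0∞)
    (p : ℝ) (t : ℝ≥0∞) : ℝ≥0∞ :=
  ⨆ (v : Y → ℝ≥0∞) (_ : MemAp μ ℬ p v ∧ apConst μ ℬ p v ≤ t),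
    bConst μ ℬ Λ wone v

end JNW
namespace JNAux

variable {Y : Type*} [MeasurableSpace Y] {F : Type*}

lemma ptwise (u v : ℝ≥0∞) {a b θ : ℝ} (ha : 0 ≤ a) (hb : 0 ≤ b) (h0 : 0 ≤ θ) (h1 : θ ≤ 1) :
    (u ^ a * v) ^ θ * (u ^ b * v) ^ (1 - θ) = u ^ (θ * a + (1 - θ) * b) * v := by
  have h1' : (0:ℝ) ≤ 1 - θ := by linarith
  rw [ENNReal.mul_rpow_of_nonneg _ _ h0, ENNReal.mul_rpow_of_nonneg _ _ h1',
    ← ENNReal.rpow_mul, ← ENNReal.rpow_mul, mul_mul_mul_comm,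
    ← ENNReal.rpow_add_of_nonneg _ _ (mul_nonneg ha h0) (mul_nonneg hb h1'),
    ← ENNReal.rpow_add_of_nonneg _ _ h0 h1']
  rw [show θ + (1 - θ) = (1:ℝ) by ring, ENNReal.rpow_one,
    show a * θ + b * (1 - θ) = θ * a + (1 - θ) * b by ring]

lemma holder_aux {α : Type*} [MeasurableSpace α] (ν : Measure α) (g h : α → ℝ≥0∞)
    (hg : AEMeasurable g ν) (hh : AEMeasurable h ν) {θ : ℝ} (h0 : 0 ≤ θ) (h1 : θ ≤ 1) :
    ∫⁻ x, g x ^ θ * h x ^ (1 - θ) ∂ν ≤ (∫⁻ x, g x ∂ν) ^ θ * (∫⁻ x, h x ∂ν) ^ (1 - θ) := by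
  rcases eq_or_lt_of_le h0 with h0' | h0'
  · simp [← h0']
  rcases eq_or_lt_of_le h1 with h1' | h1'
  · simp [h1']
  have hne : θ ≠ 0 := h0'.ne'
  have hne1 : 1 - θ ≠ 0 := by linarith
  have hpq : Real.HolderConjugate (1 / θ) (1 / (1 - θ)) :=
    Real.holderConjugate_one_div h0' (by linarith) (by ring)
  have key := ENNReal.lintegral_mul_le_Lp_mul_Lq ν hpq
    (hg.pow_const θ) (hh.pow_const (1 - θ))
  simp only [Pi.mul_apply] at key
  calc ∫⁻ x, g x ^ θ * h x ^ (1 - θ) ∂ν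
      ≤ (∫⁻ x, (g x ^ θ) ^ (1/θ) ∂ν) ^ (1 / (1/θ)) *
        (∫⁻ x, (h x ^ (1-θ)) ^ (1/(1-θ)) ∂ν) ^ (1 / (1/(1-θ))) := key
    _ = (∫⁻ x, g x ∂ν) ^ θ * (∫⁻ x, h x ∂ν) ^ (1 - θ) := by
        rw [one_div_one_div, one_div_one_div]
        congr 1 <;> congr 1 <;> refine lintegral_congr fun x => ?_ <;>
          rw [← ENNReal.rpow_mul]
        · rw [mul_one_div_cancel hne, ENNReal.rpow_one]
        · rw [mul_one_div_cancel hne1, ENNReal.rpow_one]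

end JNAux
namespace JNAux2
open JNAux

variable {Y : Type*} [MeasurableSpace Y] {F : Type*}

/-- `N_r(f) = sup_{B∈ℬ} (∫_B Λ^r w)/(∫_B w)`. -/
def NN (μ : Measure Y) (ℬ : Set (Set Y)) (Λ : F → Set Y → Y → ℝ≥0∞)
    (w : Y → ℝ≥0∞) (r : ℝ) (f : F) : ℝ≥0∞ :=
  ⨆ B ∈ ℬ, (∫⁻ x in B, Λ f B x ^ r * w x ∂μ) / ∫⁻ x in B, w x ∂μ

lemma xNorm_def (μ : Measure Y) (ℬ : Set (Set Y)) (Λ : F → Set Y → Y → ℝ≥0∞)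
    (w : Y → ℝ≥0∞) (r : ℝ) (f : F) :
    JNW.xNorm μ ℬ Λ w r f = NN μ ℬ Λ w r f ^ (1 / r) := rfl

lemma NN_eq_pow (μ : Measure Y) (ℬ : Set (Set Y)) (Λ : F → Set Y → Y → ℝ≥0∞)
    (w : Y → ℝ≥0∞) {r : ℝ} (hr : r ≠ 0) (f : F) :
    NN μ ℬ Λ w r f = JNW.xNorm μ ℬ Λ w r f ^ r := by
  rw [xNorm_def, ← ENNReal.rpow_mul, one_div, inv_mul_cancel₀ hr, ENNReal.rpow_one]

lemma NN_interp (μ : Measure Y) (ℬ : Set (Set Y)) (Λ : F → Set Y → Y → ℝ≥0∞)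
    (hΛ : ∀ (f : F) (B : Set Y), Measurable (Λ f B))
    (w : Y → ℝ≥0∞) (hwm : Measurable w)
    (hWfin : ∀ B ∈ ℬ, ∫⁻ x in B, w x ∂μ < ⊤)
    (f : F) {a b θ : ℝ} (ha : 0 ≤ a) (hb : 0 ≤ b) (h0 : 0 ≤ θ) (h1 : θ ≤ 1) :
    NN μ ℬ Λ w (θ * a + (1 - θ) * b) f ≤ NN μ ℬ Λ w a f ^ θ * NN μ ℬ Λ w b f ^ (1 - θ) := by
  refine iSup₂_le fun B hB => ?_
  set W := ∫⁻ x in B, w x ∂μ with hWdef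
  set Ia := ∫⁻ x in B, Λ f B x ^ a * w x ∂μ with hIa
  set Ib := ∫⁻ x in B, Λ f B x ^ b * w x ∂μ with hIb
  have h1' : (0:ℝ) ≤ 1 - θ := by linarith
  have hI : (∫⁻ x in B, Λ f B x ^ (θ * a + (1 - θ) * b) * w x ∂μ) ≤ Ia ^ θ * Ib ^ (1 - θ) := by
    calc (∫⁻ x in B, Λ f B x ^ (θ * a + (1 - θ) * b) * w x ∂μ)
        = ∫⁻ x in B, (Λ f B x ^ a * w x) ^ θ * (Λ f B x ^ b * w x) ^ (1 - θ) ∂μ :=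
          lintegral_congr fun x => (ptwise _ _ ha hb h0 h1).symm
      _ ≤ Ia ^ θ * Ib ^ (1 - θ) :=
          holder_aux (μ.restrict B) _ _
            (((hΛ f B).pow_const a).mul hwm).aemeasurable
            (((hΛ f B).pow_const b).mul hwm).aemeasurable h0 h1
  by_cases hW : W = 0
  · have hw0 : w =ᵐ[μ.restrict B] 0 := (lintegral_eq_zero_iff hwm).mp hW
    have hz : (∫⁻ x in B, Λ f B x ^ (θ * a + (1 - θ) * b) * w x ∂μ) = 0 := by
      rw [lintegral_eq_zero_iff (f := fun x => Λ f B x ^ (θ * a + (1 - θ) * b) * w x) (((hΛ f B).pow_const _).mul hwm)]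
      filter_upwards [hw0] with x hx
      simp [hx]
    simp [hz]
  · have hWtop : W ≠ ⊤ := (hWfin B hB).ne
    have hWθ0 : W ^ θ ≠ 0 := (ENNReal.rpow_pos (pos_iff_ne_zero.mpr hW) hWtop).ne'
    have hWθt : W ^ θ ≠ ⊤ := ENNReal.rpow_ne_top_of_nonneg h0 hWtop
    have key : Ia ^ θ * Ib ^ (1 - θ) / W = (Ia / W) ^ θ * ((Ib / W) ^ (1 - θ)) := by
      rw [ENNReal.div_rpow_of_nonneg _ _ h0, ENNReal.div_rpow_of_nonneg _ _ h1',
        div_eq_mul_inv, div_eq_mul_inv, div_eq_mul_inv, mul_mul_mul_comm,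
        ← ENNReal.mul_inv (Or.inl hWθ0) (Or.inl hWθt),
        ← ENNReal.rpow_add_of_nonneg _ _ h0 h1', show θ + (1 - θ) = (1:ℝ) by ring,
        ENNReal.rpow_one]
    calc (∫⁻ x in B, Λ f B x ^ (θ * a + (1 - θ) * b) * w x ∂μ) / W
        ≤ Ia ^ θ * Ib ^ (1 - θ) / W := ENNReal.div_le_div_right hI W
      _ = (Ia / W) ^ θ * ((Ib / W) ^ (1 - θ)) := key
      _ ≤ NN μ ℬ Λ w a f ^ θ * NN μ ℬ Λ w b f ^ (1 - θ) := by
          refine mul_le_mul' (ENNReal.rpow_le_rpow ?_ h0) (ENNReal.rpow_le_rpow ?_ h1')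
          · exact le_iSup₂ (f := fun B' (_ : B' ∈ ℬ) =>
              (∫⁻ x in B', Λ f B' x ^ a * w x ∂μ) / ∫⁻ x in B', w x ∂μ) B hB
          · exact le_iSup₂ (f := fun B' (_ : B' ∈ ℬ) =>
              (∫⁻ x in B', Λ f B' x ^ b * w x ∂μ) / ∫⁻ x in B', w x ∂μ) B hB

lemma NN_zero_le_one (μ : Measure Y) (ℬ : Set (Set Y)) (Λ : F → Set Y → Y → ℝ≥0∞)
    (w : Y → ℝ≥0∞) (f : F) : NN μ ℬ Λ w 0 f ≤ 1 := by
  refine iSup₂_le fun B hB => ?_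
  simp only [ENNReal.rpow_zero, one_mul]
  exact ENNReal.div_self_le_one

end JNAux2
namespace JNAux2
variable {Y : Type*} [MeasurableSpace Y] {F : Type*}

lemma key_selfimprove (μ : Measure Y) (ℬ : Set (Set Y)) (Λ : F → Set Y → Y → ℝ≥0∞)
    (hΛ : ∀ (f : F) (B : Set Y), Measurable (Λ f B))
    (w : Y → ℝ≥0∞) (hwm : Measurable w)
    (hWfin : ∀ B ∈ ℬ, ∫⁻ x in B, w x ∂μ < ⊤)
    (q₀ p₀ : ℝ) (hq₀ : 0 < q₀) (hq₀' : q₀ ≤ 1) (hqp : q₀ < p₀)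
    (c : ℝ≥0∞) (hc1 : 1 ≤ c) (hctop : c < ⊤)
    (hc : ∀ f : F, JNW.xNorm μ ℬ Λ w 1 f < ⊤ →
      JNW.xNorm μ ℬ Λ w p₀ f ≤ c * JNW.xNorm μ ℬ Λ w q₀ f)
    (p : ℝ) (hp : 0 < p) (hpq : p < q₀) :
    ∃ C : ℝ≥0∞, C < ⊤ ∧ ∀ f : F, JNW.xNorm μ ℬ Λ w 1 f < ⊤ →
      JNW.xNorm μ ℬ Λ w q₀ f ≤ C * JNW.xNorm μ ℬ Λ w p f := by
  have hp₀ : (0:ℝ) < p₀ := lt_trans hq₀ hqp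
  set θ : ℝ := (p₀ - q₀) / (p₀ - p) with hθdef
  have hd : (0:ℝ) < p₀ - p := by linarith
  have hθ0 : 0 < θ := div_pos (by linarith) hd
  have hθ1 : θ < 1 := (div_lt_one hd).mpr (by linarith)
  have hcomb : θ * p + (1 - θ) * p₀ = q₀ := by
    rw [hθdef]; field_simp; ring
  set α : ℝ := (p₀ / q₀) * (1 - θ) with hαdef
  have hα0 : 0 ≤ α := by
    apply mul_nonneg (div_nonneg hp₀.le hq₀.le); linarith
  have h1α : 1 - α = θ * p / q₀ := by
    rw [hαdef, hθdef]; field_simp; ring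
  have h1αpos : 0 < 1 - α := by rw [h1α]; positivity
  have h1αq : (1 - α) * q₀ = θ * p := by
    rw [h1α]; field_simp
  refine ⟨c ^ (p₀ * (1 - θ) / (θ * p)), ENNReal.rpow_lt_top_of_nonneg (div_nonneg (mul_nonneg hp₀.le (by linarith)) (mul_nonneg hθ0.le hp.le)) hctop.ne,
    fun f hfin => ?_⟩
  set A := NN μ ℬ Λ w q₀ f with hAdef
  have hN1 : NN μ ℬ Λ w 1 f < ⊤ := by
    rw [NN_eq_pow μ ℬ Λ w one_ne_zero f]
    exact ENNReal.rpow_lt_top_of_nonneg zero_le_one hfin.ne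
  have hAfin : A < ⊤ := by
    have h := NN_interp μ ℬ Λ hΛ w hwm hWfin f (a := 1) (b := 0) zero_le_one le_rfl hq₀.le hq₀'
    rw [show q₀ * 1 + (1 - q₀) * 0 = q₀ by ring] at h
    calc A ≤ NN μ ℬ Λ w 1 f ^ q₀ * NN μ ℬ Λ w 0 f ^ (1 - q₀) := h
      _ ≤ NN μ ℬ Λ w 1 f ^ q₀ * 1 := by
          refine mul_le_mul' le_rfl ?_
          calc NN μ ℬ Λ w 0 f ^ (1 - q₀) ≤ (1:ℝ≥0∞) ^ (1 - q₀) :=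
                ENNReal.rpow_le_rpow (NN_zero_le_one μ ℬ Λ w f) (by linarith)
            _ = 1 := ENNReal.one_rpow _
      _ < ⊤ := by
          rw [mul_one]
          exact ENNReal.rpow_lt_top_of_nonneg hq₀.le hN1.ne
  have hNp₀ : NN μ ℬ Λ w p₀ f ≤ c ^ p₀ * A ^ (p₀ / q₀) := by
    rw [NN_eq_pow μ ℬ Λ w hp₀.ne' f]
    refine le_trans (ENNReal.rpow_le_rpow (hc f hfin) hp₀.le) ?_
    rw [ENNReal.mul_rpow_of_nonneg _ _ hp₀.le, xNorm_def, ← ENNReal.rpow_mul,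
      show 1 / q₀ * p₀ = p₀ / q₀ by ring]
  set K := NN μ ℬ Λ w p f ^ θ * c ^ (p₀ * (1 - θ)) with hKdef
  have hstep : A ≤ K * A ^ α := by
    have h2 := NN_interp μ ℬ Λ hΛ w hwm hWfin f (a := p) (b := p₀) hp.le hp₀.le hθ0.le hθ1.le
    rw [hcomb] at h2
    calc A ≤ NN μ ℬ Λ w p f ^ θ * NN μ ℬ Λ w p₀ f ^ (1 - θ) := h2
      _ ≤ NN μ ℬ Λ w p f ^ θ * (c ^ p₀ * A ^ (p₀ / q₀)) ^ (1 - θ) :=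
          mul_le_mul' le_rfl (ENNReal.rpow_le_rpow hNp₀ (by linarith))
      _ = K * A ^ α := by
          rw [ENNReal.mul_rpow_of_nonneg _ _ (by linarith : (0:ℝ) ≤ 1 - θ),
            ← ENNReal.rpow_mul, ← ENNReal.rpow_mul, hKdef, hαdef, mul_assoc]
  have hself : A ≤ K ^ (1 / (1 - α)) := by
    by_cases hA0 : A = 0
    · rw [hA0]; exact zero_le
    · have hAα0 : A ^ α ≠ 0 := (ENNReal.rpow_pos (pos_iff_ne_zero.mpr hA0) hAfin.ne).ne'
      have hAαt : A ^ α ≠ ⊤ := ENNReal.rpow_ne_top_of_nonneg hα0 hAfin.ne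
      have hsplit : A ^ (1 - α) * A ^ α = A := by
        rw [← ENNReal.rpow_add_of_nonneg _ _ h1αpos.le hα0,
          show (1 - α) + α = (1:ℝ) by ring, ENNReal.rpow_one]
      have h3 : A ^ (1 - α) ≤ K :=
        (ENNReal.mul_le_mul_iff_left hAα0 hAαt).mp (by rw [hsplit]; exact hstep)
      calc A = (A ^ (1 - α)) ^ (1 / (1 - α)) := by
            rw [← ENNReal.rpow_mul, mul_one_div_cancel h1αpos.ne', ENNReal.rpow_one]
        _ ≤ K ^ (1 / (1 - α)) := ENNReal.rpow_le_rpow h3 (by positivity)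
  have hfinal : JNW.xNorm μ ℬ Λ w q₀ f ≤ K ^ (1 / (θ * p)) := by
    rw [xNorm_def]
    calc A ^ (1 / q₀) ≤ (K ^ (1 / (1 - α))) ^ (1 / q₀) :=
          ENNReal.rpow_le_rpow hself (by positivity)
      _ = K ^ (1 / (θ * p)) := by
          rw [← ENNReal.rpow_mul]
          congr 1
          rw [div_mul_div_comm, one_mul, ← h1αq]
  refine hfinal.trans (le_of_eq ?_)
  rw [hKdef, ENNReal.mul_rpow_of_nonneg _ _ (by positivity : (0:ℝ) ≤ 1 / (θ * p)),
    ← ENNReal.rpow_mul, ← ENNReal.rpow_mul, xNorm_def, mul_comm]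
  have hθ' : θ ≠ 0 := hθ0.ne'
  have hp' : p ≠ 0 := hp.ne'
  congr 2
  · field_simp
  · field_simp

end JNAux2
/-- **Lemma 3.1.** Fix `w ∈ A_∞(ℬ)`.  If there exist `0 < q₀ < p₀ < ∞` with `q₀ ≤ 1` such that
`X_w(ℬ,Λ)` satisfies the `p`-power John–Nirenberg property on the interval `[q₀, p₀]`, then
`X_w(ℬ,Λ)` also satisfies the `p`-power John–Nirenberg property on the interval `(0, p₀]`. -/
theorem statement0
    {Y F : Type*} [MeasurableSpace Y] (μ : Measure Y) [SigmaFinite μ]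
    (ℬ : Set (Set Y)) (hmeas : ∀ B ∈ ℬ, MeasurableSet B)
    (hℬ : ∀ B ∈ ℬ, 0 < μ B ∧ μ B < ⊤)
    (Λ : F → Set Y → Y → ℝ≥0∞) (hΛ : ∀ (f : F) (B : Set Y), Measurable (Λ f B))
    (w : Y → ℝ≥0∞) (hw : JNW.MemAinfty μ ℬ w)
    (q₀ p₀ : ℝ) (hq₀ : 0 < q₀) (hq₀' : q₀ ≤ 1) (hqp : q₀ < p₀)
    (hJN : JNW.JNprop μ ℬ Λ w (Set.Icc q₀ p₀)) :
    JNW.JNprop μ ℬ Λ w (Set.Ioc 0 p₀) := by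
  obtain ⟨r, -, hwm, hWfin, -⟩ := hw
  intro p hp q hq hpq
  by_cases hcase : q₀ ≤ p
  · exact hJN p ⟨hcase, hpq.le.trans hq.2⟩ q ⟨hcase.trans hpq.le, hq.2⟩ hpq
  push_neg at hcase
  -- get a constant `c ≥ 1` for the `q₀ → p₀` inequality
  obtain ⟨c₀, hc₀top, hc₀⟩ := hJN q₀ ⟨le_rfl, hqp.le⟩ p₀ ⟨hqp.le, le_rfl⟩ hqp
  set c := max c₀ 1 with hcdef
  have hc1 : 1 ≤ c := le_max_right _ _
  have hctop : c < ⊤ := max_lt hc₀top ENNReal.one_lt_top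
  have hc : ∀ f : F, JNW.xNorm μ ℬ Λ w 1 f < ⊤ →
      JNW.xNorm μ ℬ Λ w p₀ f ≤ c * JNW.xNorm μ ℬ Λ w q₀ f :=
    fun f hf => (hc₀ f hf).trans (mul_le_mul_left (le_max_left _ _) _)
  obtain ⟨Ck, hCktop, hkey⟩ := JNAux2.key_selfimprove μ ℬ Λ hΛ w hwm hWfin q₀ p₀ hq₀ hq₀' hqp
    c hc1 hctop hc p hp.1 hcase
  rcases lt_trichotomy q q₀ with hqlt | hqeq | hqgt
  · -- q < q₀ : interpolate between p and q₀
    have hq0 : (0:ℝ) < q := lt_trans hp.1 hpq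
    set θ : ℝ := (q₀ - q) / (q₀ - p) with hθdef
    have hd : (0:ℝ) < q₀ - p := by linarith
    have hθ0 : 0 < θ := div_pos (by linarith) hd
    have hθ1 : θ < 1 := (div_lt_one hd).mpr (by linarith)
    have hcomb : θ * p + (1 - θ) * q₀ = q := by rw [hθdef]; field_simp; ring
    set s : ℝ := p * θ / q with hsdef
    set t : ℝ := q₀ * (1 - θ) / q with htdef
    have hs0 : 0 < s := by apply div_pos (mul_pos hp.1 hθ0) hq0
    have ht0 : 0 < t := by
      apply div_pos (mul_pos hq₀ (by linarith)) hq0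
    have hst : s + t = 1 := by
      rw [hsdef, htdef, ← add_div, div_eq_one_iff_eq hq0.ne']
      rw [← hcomb]; ring
    refine ⟨Ck ^ t, ENNReal.rpow_lt_top_of_nonneg ht0.le hCktop.ne, fun f hf => ?_⟩
    have h2 := JNAux2.NN_interp μ ℬ Λ hΛ w hwm hWfin f (a := p) (b := q₀)
      hp.1.le hq₀.le hθ0.le hθ1.le
    rw [hcomb] at h2
    have hx : JNW.xNorm μ ℬ Λ w q f ≤
        JNW.xNorm μ ℬ Λ w p f ^ s * JNW.xNorm μ ℬ Λ w q₀ f ^ t := by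
      rw [JNAux2.xNorm_def]
      calc JNAux2.NN μ ℬ Λ w q f ^ (1/q)
          ≤ (JNAux2.NN μ ℬ Λ w p f ^ θ * JNAux2.NN μ ℬ Λ w q₀ f ^ (1 - θ)) ^ (1/q) :=
            ENNReal.rpow_le_rpow h2 (by positivity)
        _ = JNW.xNorm μ ℬ Λ w p f ^ s * JNW.xNorm μ ℬ Λ w q₀ f ^ t := by
            rw [ENNReal.mul_rpow_of_nonneg _ _ (by positivity : (0:ℝ) ≤ 1/q),
              JNAux2.NN_eq_pow μ ℬ Λ w hp.1.ne' f, JNAux2.NN_eq_pow μ ℬ Λ w hq₀.ne' f,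
              ← ENNReal.rpow_mul, ← ENNReal.rpow_mul, ← ENNReal.rpow_mul, ← ENNReal.rpow_mul]
            congr 2
            · rw [hsdef]; ring
            · rw [htdef]; ring
    calc JNW.xNorm μ ℬ Λ w q f
        ≤ JNW.xNorm μ ℬ Λ w p f ^ s * JNW.xNorm μ ℬ Λ w q₀ f ^ t := hx
      _ ≤ JNW.xNorm μ ℬ Λ w p f ^ s * (Ck * JNW.xNorm μ ℬ Λ w p f) ^ t :=
          mul_le_mul' le_rfl (ENNReal.rpow_le_rpow (hkey f hf) ht0.le)
      _ = Ck ^ t * (JNW.xNorm μ ℬ Λ w p f ^ s * JNW.xNorm μ ℬ Λ w p f ^ t) := by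
          rw [ENNReal.mul_rpow_of_nonneg _ _ ht0.le, mul_left_comm]
      _ = Ck ^ t * JNW.xNorm μ ℬ Λ w p f := by
          rw [← ENNReal.rpow_add_of_nonneg _ _ hs0.le ht0.le, hst, ENNReal.rpow_one]
  · subst hqeq
    exact ⟨Ck, hCktop, hkey⟩
  · -- q₀ < q : compose with the given John–Nirenberg inequality from q₀ to q
    obtain ⟨c₂, hc₂top, hc₂⟩ := hJN q₀ ⟨le_rfl, hqp.le⟩ q ⟨hqgt.le, hq.2⟩ hqgt
    refine ⟨c₂ * Ck, ENNReal.mul_lt_top hc₂top hCktop, fun f hf => ?_⟩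
    calc JNW.xNorm μ ℬ Λ w q f ≤ c₂ * JNW.xNorm μ ℬ Λ w q₀ f := hc₂ f hf
      _ ≤ c₂ * (Ck * JNW.xNorm μ ℬ Λ w p f) := mul_le_mul_right (hkey f hf) _
      _ = c₂ * Ck * JNW.xNorm μ ℬ Λ w p f := by rw [mul_assoc]
end
end

section
/- Suppose assumption A4 holds. If X(ℬ,Λ) satisfies the p-power John-Nirenberg property on [1,∞), then for every 1<p<∞, every t≥1, and every v∈A_p(ℬ) with [v]_{A_p}≤t, one has ‖f‖_{X_v} ≤ K(p,t)·c_{1,Δ(p,t)'}·‖f‖_X for all f∈X(ℬ,Λ); consequently Ψ_p(t) ≤ K(p,t)·c_{1,Δ(p,t)'}. -/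
open MeasureTheory ENNReal Set

noncomputable section

namespace JNW

variable {Y : Type*} [MeasurableSpace Y] {F : Type*}

lemma aux_mul_div (X Z m : ℝ≥0∞) (α β : ℝ) (h0 : m ≠ 0) (ht : m ≠ ⊤)
    (hα : 0 ≤ α) (hβ : 0 ≤ β) (hαβ : α + β = 1) :
    (X / m) ^ α * (Z / m) ^ β * m = X ^ α * Z ^ β := by
  have hm : m ^ (-α) * m ^ (-β) * m = 1 := by
    rw [← ENNReal.rpow_add _ _ h0 ht, show -α + -β = -1 by linarith,
      ENNReal.rpow_neg_one, ENNReal.inv_mul_cancel h0 ht]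
  rw [ENNReal.div_rpow_of_nonneg _ _ hα, ENNReal.div_rpow_of_nonneg _ _ hβ,
    div_eq_mul_inv, div_eq_mul_inv, ← ENNReal.rpow_neg, ← ENNReal.rpow_neg]
  calc X ^ α * m ^ (-α) * (Z ^ β * m ^ (-β)) * m
      = X ^ α * Z ^ β * (m ^ (-α) * m ^ (-β) * m) := by ring
    _ = X ^ α * Z ^ β := by rw [hm, mul_one]

end JNW

namespace JNWAux
open JNW MeasureTheory ENNReal

variable {Y : Type*} [MeasurableSpace Y] {F : Type*}

/-- Power mean inequality for averages, via Hölder. -/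
lemma avg_pm (μ : Measure Y) {B : Set Y} (h0 : μ B ≠ 0) (ht : μ B ≠ ⊤)
    {g : Y → ℝ≥0∞} (hg : Measurable g) {a b : ℝ} (ha : 0 < a) (hab : a ≤ b) :
    (lavg μ B fun x => g x ^ a) ^ (1 / a) ≤ (lavg μ B fun x => g x ^ b) ^ (1 / b) := by
  rcases eq_or_lt_of_le hab with rfl | hlt
  · exact le_rfl
  have hb : 0 < b := ha.trans hlt
  have hr : 1 < b / a := (one_lt_div ha).2 hlt
  have hrs : (b / a).HolderConjugate (b / a).conjExponent :=
    Real.HolderConjugate.conjExponent hr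
  set s : ℝ := (b / a).conjExponent with hs_def
  have hH := ENNReal.lintegral_mul_le_Lp_mul_Lq (μ.restrict B) hrs
    (f := fun x => g x ^ a) (g := fun _ => (1 : ℝ≥0∞))
    ((hg.pow_const a).aemeasurable) aemeasurable_const
  have hpow : ∀ x : Y, (g x ^ a) ^ (b / a) = g x ^ b := by
    intro x
    rw [← ENNReal.rpow_mul]
    congr 1
    field_simp
  simp only [Pi.mul_apply, mul_one, ENNReal.one_rpow, setLIntegral_one, hpow] at hH
  -- `hH : ∫ g^a ≤ (∫ g^b)^(1/(b/a)) * μ B ^ (1/s)`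
  have hμs : μ B ^ ((1 : ℝ) / s) = μ B / μ B ^ (a / b) := by
    have hse : (1 : ℝ) / s = 1 + -(a / b) := by
      have h1 : (b / a)⁻¹ + s⁻¹ = 1 := hrs.inv_add_inv_eq_one
      have h2 : (b / a)⁻¹ = a / b := by rw [inv_div]
      rw [one_div]
      linarith
    rw [hse, ENNReal.rpow_add _ _ h0 ht, ENNReal.rpow_one, ENNReal.rpow_neg]
    exact (div_eq_mul_inv _ _).symm
  have hinvr : (1 : ℝ) / (b / a) = a / b := by rw [one_div, inv_div]
  have key2 : ∫⁻ x in B, g x ^ a ∂μ ≤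
      ((∫⁻ x in B, g x ^ b ∂μ) ^ (a / b) / μ B ^ (a / b)) * μ B := by
    refine hH.trans (le_of_eq ?_)
    rw [hinvr, hμs]
    simp only [div_eq_mul_inv]
    ring
  have havg : lavg μ B (fun x => g x ^ a) ≤ (lavg μ B fun x => g x ^ b) ^ (a / b) := by
    rw [lavg, lavg, ENNReal.div_rpow_of_nonneg _ _ (by positivity)]
    rw [ENNReal.div_le_iff_le_mul (Or.inl h0) (Or.inl ht)]
    exact key2
  calc (lavg μ B fun x => g x ^ a) ^ (1 / a)
      ≤ ((lavg μ B fun x => g x ^ b) ^ (a / b)) ^ (1 / a) :=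
        ENNReal.rpow_le_rpow havg (by positivity)
    _ = (lavg μ B fun x => g x ^ b) ^ (1 / b) := by
        rw [← ENNReal.rpow_mul]
        congr 1
        field_simp

/-- If some `B ∈ ℬ` has `∫_B v ≠ 0`, then the `A_p` characteristic is at least `1`. -/
lemma one_le_apConst {μ : Measure Y} {ℬ : Set (Set Y)} {p : ℝ} {v : Y → ℝ≥0∞}
    (hmeas : ∀ B ∈ ℬ, MeasurableSet B) (hℬ : ∀ B ∈ ℬ, 0 < μ B ∧ μ B < ⊤)
    (hp : 1 < p) (hv : MemAp μ ℬ p v) {B : Set Y} (hB : B ∈ ℬ)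
    (hnz : ∫⁻ x in B, v x ∂μ ≠ 0) : 1 ≤ apConst μ ℬ p v := by
  obtain ⟨hB0, hBt⟩ := hℬ B hB
  have hBm := hmeas B hB
  have hvm := hv.1
  have hfin : ∫⁻ x in B, v x ∂μ ≠ ⊤ := (hv.2.1 B hB).ne
  have hps : p.HolderConjugate (conj p) := Real.HolderConjugate.conjExponent hp
  have hp0 : p ≠ 0 := hps.ne_zero
  set s : ℝ := -(conj p / p) with hs_def
  have hsneg : s < 0 := by
    have h1 : 0 < conj p / p := div_pos hps.symm.pos hps.pos
    simp only [hs_def]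
    linarith
  have hlavgv0 : lavg μ B v ≠ 0 := by
    simp [lavg, ENNReal.div_eq_zero_iff, hnz, hBt.ne]
  have hterm : (1 : ℝ≥0∞) ≤ lavg μ B v * (lavg μ B fun x => v x ^ s) ^ (p / conj p) := by
    by_cases h0 : μ (B ∩ {x | v x = 0}) = 0
    · -- Hölder case
      have hae0 : ∀ᵐ x ∂(μ.restrict B), v x ≠ 0 := by
        rw [ae_restrict_iff' hBm, ae_iff]
        convert h0 using 2
        ext x
        simp [Set.mem_inter_iff, Classical.not_imp]
      have haet : ∀ᵐ x ∂(μ.restrict B), v x ≠ ⊤ :=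
        (ae_lt_top hvm hfin).mono fun x hx => hx.ne
      have hone : μ B = ∫⁻ x in B,
          ((fun x => v x ^ (p⁻¹ : ℝ)) * fun x => v x ^ (-p⁻¹ : ℝ)) x ∂μ := by
        rw [← setLIntegral_one]
        refine lintegral_congr_ae ?_
        filter_upwards [hae0, haet] with x h0x htx
        simp only [Pi.mul_apply]
        rw [← ENNReal.rpow_add _ _ h0x htx]
        simp
      have hH := ENNReal.lintegral_mul_le_Lp_mul_Lq (μ.restrict B) hps
        (f := fun x => v x ^ (p⁻¹ : ℝ)) (g := fun x => v x ^ (-p⁻¹ : ℝ))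
        ((hvm.pow_const _).aemeasurable) ((hvm.pow_const _).aemeasurable)
      have hf1 : ∀ x : Y, (v x ^ (p⁻¹ : ℝ)) ^ p = v x := by
        intro x
        rw [← ENNReal.rpow_mul, inv_mul_cancel₀ hp0, ENNReal.rpow_one]
      have hg1 : ∀ x : Y, (v x ^ (-p⁻¹ : ℝ)) ^ conj p = v x ^ s := by
        intro x
        rw [← ENNReal.rpow_mul]
        congr 1
        simp only [hs_def]
        field_simp
      have hH' : μ B ≤ (∫⁻ x in B, v x ∂μ) ^ (1 / p) *
          (∫⁻ x in B, v x ^ s ∂μ) ^ (1 / conj p) := by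
        rw [hone]
        refine hH.trans (le_of_eq ?_)
        congr 1
        · congr 1
          exact lintegral_congr fun x => hf1 x
        · congr 1
          exact lintegral_congr fun x => hg1 x
      have hZeq : lavg μ B v ^ ((1:ℝ) / p) * (lavg μ B fun x => v x ^ s) ^ ((1:ℝ) / conj p)
          * μ B = (∫⁻ x in B, v x ∂μ) ^ (1 / p) *
            (∫⁻ x in B, v x ^ s ∂μ) ^ (1 / conj p) := by
        rw [lavg, lavg]
        refine aux_mul_div _ _ _ _ _ hB0.ne' hBt.ne (le_of_lt hps.one_div_pos)
          (le_of_lt hps.symm.one_div_pos) ?_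
        rw [one_div, one_div]
        exact hps.inv_add_inv_eq_one
      have h1le : (1 : ℝ≥0∞) ≤ lavg μ B v ^ ((1:ℝ) / p) *
          (lavg μ B fun x => v x ^ s) ^ ((1:ℝ) / conj p) := by
        have hμ : μ B ≤ (lavg μ B v ^ ((1:ℝ) / p) *
            (lavg μ B fun x => v x ^ s) ^ ((1:ℝ) / conj p)) * μ B := by
          rw [hZeq]; exact hH'
        have := mul_le_mul_left hμ (μ B)⁻¹
        rwa [ENNReal.mul_inv_cancel hB0.ne' hBt.ne, mul_assoc,
          ENNReal.mul_inv_cancel hB0.ne' hBt.ne, mul_one] at this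
      have hfinal := ENNReal.rpow_le_rpow h1le (le_of_lt hps.pos)
      rw [ENNReal.one_rpow, ENNReal.mul_rpow_of_nonneg _ _ hps.nonneg,
        ← ENNReal.rpow_mul, ← ENNReal.rpow_mul, one_div_mul_cancel hp0,
        ENNReal.rpow_one, one_div_mul_eq_div] at hfinal
      exact hfinal
    · -- the singular case : the integral of `v ^ s` is infinite
      have hSm : MeasurableSet (B ∩ {x | v x = 0}) :=
        hBm.inter (hvm (measurableSet_singleton 0))
      have h1 : ∫⁻ x in B ∩ {x | v x = 0}, v x ^ s ∂μ = ⊤ := by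
        rw [setLIntegral_congr_fun hSm (fun x hx => ?_), setLIntegral_const]
        · exact ENNReal.top_mul h0
        · show v x ^ s = ⊤
          rw [hx.2, ENNReal.zero_rpow_of_neg hsneg]
      have htop : ∫⁻ x in B, v x ^ s ∂μ = ⊤ :=
        top_le_iff.mp (h1 ▸ lintegral_mono_set Set.inter_subset_left)
      have hlavg_top : (lavg μ B fun x => v x ^ s) = ⊤ := by
        rw [lavg, htop, ENNReal.top_div_of_ne_top hBt.ne]
      rw [hlavg_top, ENNReal.top_rpow_of_pos (div_pos hps.pos hps.symm.pos),
        ENNReal.mul_top hlavgv0]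
      exact le_top
  refine le_trans hterm ?_
  rw [apConst]
  exact le_biSup
    (fun B => lavg μ B v * (lavg μ B fun x => v x ^ (-(conj p / p))) ^ (p / conj p)) hB

/-- The John–Nirenberg property gives a bound through `cConst`. -/
lemma xnorm_le_cConst (μ : Measure Y) (ℬ : Set (Set Y)) (Λ : F → Set Y → Y → ℝ≥0∞)
    {q : ℝ} (hq : (1 : ℝ) < q) (hJN : JNprop μ ℬ Λ wone (Set.Ici 1)) (f : F)
    (hf : xNorm μ ℬ Λ wone 1 f < ⊤) :
    xNorm μ ℬ Λ wone q f ≤ cConst μ ℬ Λ wone 1 q * xNorm μ ℬ Λ wone 1 f := by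
  obtain ⟨C, hCfin, hCb⟩ := hJN 1 (le_refl (1:ℝ)) q (le_of_lt hq) hq
  by_cases hb : xNorm μ ℬ Λ wone 1 f = 0
  · have h1 := hCb f hf
    rw [hb, mul_zero] at h1
    rw [hb, mul_zero]
    exact h1
  · have hdiv : ∀ C' ∈ {C : ℝ≥0∞ |
        ∀ g : F, xNorm μ ℬ Λ wone 1 g < ⊤ →
          xNorm μ ℬ Λ wone q g ≤ C * xNorm μ ℬ Λ wone 1 g},
        xNorm μ ℬ Λ wone q f / xNorm μ ℬ Λ wone 1 f ≤ C' := by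
      intro C' hC'
      exact (ENNReal.div_le_iff_le_mul (Or.inl hb) (Or.inl hf.ne)).mpr (hC' f hf)
    have hsinf : xNorm μ ℬ Λ wone q f / xNorm μ ℬ Λ wone 1 f ≤ cConst μ ℬ Λ wone 1 q :=
      le_sInf hdiv
    have := mul_le_mul_left hsinf (xNorm μ ℬ Λ wone 1 f)
    rwa [ENNReal.div_mul_cancel hb hf.ne] at this

end JNWAux

/-- **Proposition 3.4.** Suppose assumption A4 holds: there are `Δ : (1,∞)² → (1,∞)`,
non-increasing in each variable, and `K : (1,∞)² → (1,∞)`, non-decreasing in each variable,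
such that every `u ∈ A_p(ℬ)` lies in `RH_{Δ(p,[u]_{A_p})}(ℬ)` with
`[u]_{RH_{Δ(p,[u]_{A_p})}} ≤ K(p,[u]_{A_p})`.  If `X(ℬ,Λ)` satisfies the `p`-power
John–Nirenberg property on `[1,∞)`, then for every `1 < p < ∞`, every `t ≥ 1` and every
`v ∈ A_p(ℬ)` with `[v]_{A_p} ≤ t`, one has `‖f‖_{X_v} ≤ K(p,t) c_{1,Δ(p,t)'} ‖f‖_X` for all
`f ∈ X(ℬ,Λ)`; consequently `Ψ_p(t) ≤ K(p,t) c_{1,Δ(p,t)'}`. -/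
theorem statement4
    {Y F : Type*} [MeasurableSpace Y] (μ : Measure Y) [SigmaFinite μ]
    (ℬ : Set (Set Y)) (hmeas : ∀ B ∈ ℬ, MeasurableSet B)
    (hℬ : ∀ B ∈ ℬ, 0 < μ B ∧ μ B < ⊤)
    (Λ : F → Set Y → Y → ℝ≥0∞) (hΛ : ∀ (f : F) (B : Set Y), Measurable (Λ f B))
    (Δ : ℝ → ℝ≥0∞ → ℝ) (K : ℝ → ℝ≥0∞ → ℝ≥0∞)
    (hΔrange : ∀ (p : ℝ) (t : ℝ≥0∞), 1 < p → 1 ≤ t → 1 < Δ p t)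
    (hKrange : ∀ (p : ℝ) (t : ℝ≥0∞), 1 < p → 1 ≤ t → 1 < K p t)
    (hΔmono : ∀ (p₁ p₂ : ℝ) (t₁ t₂ : ℝ≥0∞), 1 < p₁ → p₁ ≤ p₂ → 1 ≤ t₁ → t₁ ≤ t₂ →
      Δ p₂ t₂ ≤ Δ p₁ t₁)
    (hKmono : ∀ (p₁ p₂ : ℝ) (t₁ t₂ : ℝ≥0∞), 1 < p₁ → p₁ ≤ p₂ → 1 ≤ t₁ → t₁ ≤ t₂ →
      K p₁ t₁ ≤ K p₂ t₂)
    (hA4 : ∀ p : ℝ, 1 < p → ∀ u : Y → ℝ≥0∞, JNW.MemAp μ ℬ p u →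
      JNW.MemRH μ ℬ (Δ p (JNW.apConst μ ℬ p u)) u ∧
      JNW.rhConst μ ℬ (Δ p (JNW.apConst μ ℬ p u)) u ≤ K p (JNW.apConst μ ℬ p u))
    (hJN : JNW.JNprop μ ℬ Λ JNW.wone (Set.Ici 1)) :
    ∀ (p : ℝ) (t : ℝ≥0∞), 1 < p → 1 ≤ t →
      (∀ v : Y → ℝ≥0∞, JNW.MemAp μ ℬ p v → JNW.apConst μ ℬ p v ≤ t →
        ∀ f : F, JNW.xNorm μ ℬ Λ JNW.wone 1 f < ⊤ →
          JNW.xNorm μ ℬ Λ v 1 f ≤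
            K p t * JNW.cConst μ ℬ Λ JNW.wone 1 (JNW.conj (Δ p t)) *
              JNW.xNorm μ ℬ Λ JNW.wone 1 f) ∧
      JNW.psi μ ℬ Λ p t ≤ K p t * JNW.cConst μ ℬ Λ JNW.wone 1 (JNW.conj (Δ p t)) := by
  intro p t hp ht
  have hδ₀ : 1 < Δ p t := hΔrange p t hp ht
  have hcq : (Δ p t).HolderConjugate (JNW.conj (Δ p t)) :=
    Real.HolderConjugate.conjExponent hδ₀
  have hq1 : 1 < JNW.conj (Δ p t) := hcq.symm.lt
  have main : ∀ v : Y → ℝ≥0∞, JNW.MemAp μ ℬ p v → JNW.apConst μ ℬ p v ≤ t →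
      ∀ f : F, JNW.xNorm μ ℬ Λ JNW.wone 1 f < ⊤ →
        JNW.xNorm μ ℬ Λ v 1 f ≤
          K p t * JNW.cConst μ ℬ Λ JNW.wone 1 (JNW.conj (Δ p t)) *
            JNW.xNorm μ ℬ Λ JNW.wone 1 f := by
    intro v hv hvt f hf
    have hN := JNWAux.xnorm_le_cConst μ ℬ Λ hq1 hJN f hf
    have key : JNW.xNorm μ ℬ Λ v 1 f ≤
        K p t * JNW.xNorm μ ℬ Λ JNW.wone (JNW.conj (Δ p t)) f := by
      rw [JNW.xNorm, show (1:ℝ)/1 = 1 by norm_num, ENNReal.rpow_one]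
      refine iSup₂_le fun B hB => ?_
      obtain ⟨hB0, hBt⟩ := hℬ B hB
      have hBm := hmeas B hB
      have hvm := hv.1
      simp only [ENNReal.rpow_one]
      by_cases hzero : ∫⁻ x in B, v x ∂μ = 0
      · have hv0 : v =ᵐ[μ.restrict B] 0 := (lintegral_eq_zero_iff hvm).mp hzero
        have hnum : ∫⁻ x in B, Λ f B x * v x ∂μ = 0 := by
          rw [lintegral_eq_zero_iff (f := fun x => Λ f B x * v x) ((hΛ f B).mul hvm)]
          filter_upwards [hv0] with x hx
          simp [hx]
        simp [hnum, hzero]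
      · have hfin : ∫⁻ x in B, v x ∂μ ≠ ⊤ := (hv.2.1 B hB).ne
        have h1ap : 1 ≤ JNW.apConst μ ℬ p v :=
          JNWAux.one_le_apConst hmeas hℬ hp hv hB hzero
        have hδ0δ : Δ p t ≤ Δ p (JNW.apConst μ ℬ p v) :=
          hΔmono p p (JNW.apConst μ ℬ p v) t hp le_rfl h1ap hvt
        obtain ⟨hRH, hKb⟩ := hA4 p hp v hv
        have hKt : JNW.rhConst μ ℬ (Δ p (JNW.apConst μ ℬ p v)) v ≤ K p t :=
          hKb.trans (hKmono p p (JNW.apConst μ ℬ p v) t hp le_rfl h1ap hvt)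
        have hq0 : (0:ℝ) < JNW.conj (Δ p t) := hcq.symm.pos
        -- Hölder inequality on `B`
        have hH := ENNReal.lintegral_mul_le_Lp_mul_Lq (μ.restrict B) hcq.symm
          (f := fun x => Λ f B x) (g := fun x => v x)
          (hΛ f B).aemeasurable hvm.aemeasurable
        simp only [Pi.mul_apply] at hH
        -- bound for the `Λ` factor
        have hNq : (∫⁻ x in B, Λ f B x ^ (JNW.conj (Δ p t)) ∂μ) ^ (1 / JNW.conj (Δ p t)) ≤
            JNW.xNorm μ ℬ Λ JNW.wone (JNW.conj (Δ p t)) f * μ B ^ (1 / JNW.conj (Δ p t)) := by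
          have hS : JNW.xNorm μ ℬ Λ JNW.wone (JNW.conj (Δ p t)) f ^ (JNW.conj (Δ p t)) =
              ⨆ B ∈ ℬ, (∫⁻ x in B, Λ f B x ^ (JNW.conj (Δ p t)) * JNW.wone x ∂μ) /
                ∫⁻ x in B, JNW.wone x ∂μ := by
            rw [JNW.xNorm, ← ENNReal.rpow_mul, one_div_mul_cancel hq0.ne', ENNReal.rpow_one]
          have h1 : (∫⁻ x in B, Λ f B x ^ (JNW.conj (Δ p t)) * JNW.wone x ∂μ) /
              (∫⁻ x in B, JNW.wone x ∂μ) ≤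
              JNW.xNorm μ ℬ Λ JNW.wone (JNW.conj (Δ p t)) f ^ (JNW.conj (Δ p t)) := by
            rw [hS]
            exact le_biSup (fun B => (∫⁻ x in B, Λ f B x ^ (JNW.conj (Δ p t)) * JNW.wone x ∂μ) /
              ∫⁻ x in B, JNW.wone x ∂μ) hB
          simp only [JNW.wone, mul_one, setLIntegral_one] at h1
          have h2 : ∫⁻ x in B, Λ f B x ^ (JNW.conj (Δ p t)) ∂μ ≤
              JNW.xNorm μ ℬ Λ JNW.wone (JNW.conj (Δ p t)) f ^ (JNW.conj (Δ p t)) * μ B :=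
            (ENNReal.div_le_iff_le_mul (Or.inl hB0.ne') (Or.inl hBt.ne)).mp h1
          calc (∫⁻ x in B, Λ f B x ^ (JNW.conj (Δ p t)) ∂μ) ^ (1 / JNW.conj (Δ p t))
              ≤ (JNW.xNorm μ ℬ Λ JNW.wone (JNW.conj (Δ p t)) f ^ (JNW.conj (Δ p t)) * μ B) ^
                  (1 / JNW.conj (Δ p t)) := ENNReal.rpow_le_rpow h2 (by positivity)
            _ = JNW.xNorm μ ℬ Λ JNW.wone (JNW.conj (Δ p t)) f * μ B ^ (1 / JNW.conj (Δ p t)) := by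
                rw [ENNReal.mul_rpow_of_nonneg _ _ (by positivity), ← ENNReal.rpow_mul,
                  mul_one_div, div_self hq0.ne', ENNReal.rpow_one]
        -- bound for the `v` factor via reverse Hölder
        have hl0 : JNW.lavg μ B v ≠ 0 := by
          simp [JNW.lavg, ENNReal.div_eq_zero_iff, hzero, hBt.ne]
        have hlt' : JNW.lavg μ B v ≠ ⊤ := (ENNReal.div_lt_top hfin hB0.ne').ne
        have hRHB : (∫⁻ x in B, v x ^ (Δ p t) ∂μ) ^ (1 / Δ p t) ≤
            JNW.rhConst μ ℬ (Δ p (JNW.apConst μ ℬ p v)) v * JNW.lavg μ B v *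
              μ B ^ (1 / Δ p t) := by
          have he : ∫⁻ x in B, v x ^ (Δ p t) ∂μ =
              JNW.lavg μ B (fun x => v x ^ (Δ p t)) * μ B :=
            (ENNReal.div_mul_cancel hB0.ne' hBt.ne).symm
          rw [he, ENNReal.mul_rpow_of_nonneg _ _ (by positivity)]
          refine mul_le_mul_left ?_ _
          calc (JNW.lavg μ B fun x => v x ^ (Δ p t)) ^ (1 / Δ p t)
              ≤ (JNW.lavg μ B fun x => v x ^ (Δ p (JNW.apConst μ ℬ p v))) ^
                  (1 / Δ p (JNW.apConst μ ℬ p v)) :=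
                JNWAux.avg_pm μ hB0.ne' hBt.ne hvm (lt_trans one_pos hδ₀) hδ0δ
            _ ≤ JNW.rhConst μ ℬ (Δ p (JNW.apConst μ ℬ p v)) v * JNW.lavg μ B v := by
                have h2 : (JNW.lavg μ B fun x => v x ^ (Δ p (JNW.apConst μ ℬ p v))) ^
                    (1 / Δ p (JNW.apConst μ ℬ p v)) / JNW.lavg μ B v ≤
                    JNW.rhConst μ ℬ (Δ p (JNW.apConst μ ℬ p v)) v := by
                  rw [JNW.rhConst]
                  exact le_biSup (fun B =>
                    (JNW.lavg μ B fun x => v x ^ (Δ p (JNW.apConst μ ℬ p v))) ^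
                      (1 / Δ p (JNW.apConst μ ℬ p v)) / JNW.lavg μ B v) hB
                exact (ENNReal.div_le_iff_le_mul (Or.inl hl0) (Or.inl hlt')).mp h2
        -- combine
        have hμ1 : μ B ^ ((1:ℝ) / JNW.conj (Δ p t)) * μ B ^ ((1:ℝ) / Δ p t) = μ B := by
          rw [← ENNReal.rpow_add _ _ hB0.ne' hBt.ne]
          have he : (1:ℝ) / JNW.conj (Δ p t) + 1 / Δ p t = 1 := by
            have := hcq.inv_add_inv_eq_one
            rw [one_div, one_div]
            linarith
          rw [he, ENNReal.rpow_one]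
        have hlv : JNW.lavg μ B v * μ B = ∫⁻ x in B, v x ∂μ :=
          ENNReal.div_mul_cancel hB0.ne' hBt.ne
        have hchain : ∫⁻ x in B, Λ f B x * v x ∂μ ≤
            JNW.xNorm μ ℬ Λ JNW.wone (JNW.conj (Δ p t)) f *
              JNW.rhConst μ ℬ (Δ p (JNW.apConst μ ℬ p v)) v * ∫⁻ x in B, v x ∂μ := by
          calc ∫⁻ x in B, Λ f B x * v x ∂μ
              ≤ (∫⁻ x in B, Λ f B x ^ (JNW.conj (Δ p t)) ∂μ) ^ (1 / JNW.conj (Δ p t)) *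
                  (∫⁻ x in B, v x ^ (Δ p t) ∂μ) ^ (1 / Δ p t) := hH
            _ ≤ (JNW.xNorm μ ℬ Λ JNW.wone (JNW.conj (Δ p t)) f * μ B ^ (1 / JNW.conj (Δ p t))) *
                  (JNW.rhConst μ ℬ (Δ p (JNW.apConst μ ℬ p v)) v * JNW.lavg μ B v *
                    μ B ^ (1 / Δ p t)) := mul_le_mul' hNq hRHB
            _ = JNW.xNorm μ ℬ Λ JNW.wone (JNW.conj (Δ p t)) f *
                  JNW.rhConst μ ℬ (Δ p (JNW.apConst μ ℬ p v)) v * (JNW.lavg μ B v *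
                    (μ B ^ ((1:ℝ) / JNW.conj (Δ p t)) * μ B ^ ((1:ℝ) / Δ p t))) := by ring
            _ = JNW.xNorm μ ℬ Λ JNW.wone (JNW.conj (Δ p t)) f *
                  JNW.rhConst μ ℬ (Δ p (JNW.apConst μ ℬ p v)) v * ∫⁻ x in B, v x ∂μ := by
                rw [hμ1, hlv]
        rw [ENNReal.div_le_iff_le_mul (Or.inl hzero) (Or.inl hfin)]
        refine hchain.trans ?_
        refine mul_le_mul_left ?_ _
        calc JNW.xNorm μ ℬ Λ JNW.wone (JNW.conj (Δ p t)) f *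
              JNW.rhConst μ ℬ (Δ p (JNW.apConst μ ℬ p v)) v
            ≤ JNW.xNorm μ ℬ Λ JNW.wone (JNW.conj (Δ p t)) f * K p t := mul_le_mul_right hKt _
          _ = K p t * JNW.xNorm μ ℬ Λ JNW.wone (JNW.conj (Δ p t)) f := mul_comm _ _
    calc JNW.xNorm μ ℬ Λ v 1 f
        ≤ K p t * JNW.xNorm μ ℬ Λ JNW.wone (JNW.conj (Δ p t)) f := key
      _ ≤ K p t * (JNW.cConst μ ℬ Λ JNW.wone 1 (JNW.conj (Δ p t)) *
            JNW.xNorm μ ℬ Λ JNW.wone 1 f) := mul_le_mul_right hN _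
      _ = K p t * JNW.cConst μ ℬ Λ JNW.wone 1 (JNW.conj (Δ p t)) *
            JNW.xNorm μ ℬ Λ JNW.wone 1 f := (mul_assoc _ _ _).symm
  refine ⟨main, ?_⟩
  rw [JNW.psi]
  refine iSup₂_le fun v hv => ?_
  refine sInf_le ?_
  intro f hf
  exact main v hv.1 hv.2 f hf
end
end

section
/- If u∈A_p(ℬ)∩RH_δ(ℬ) for some 1<p,δ<∞, then u^δ∈A_q(ℬ) with [u^δ]_{A_q} ≤ [u]_{RH_δ}^δ·[u]_{A_p}^δ, where q = 1+δ(p−1). -/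
open MeasureTheory ENNReal Set

noncomputable section

/-- **Lemma 4.1.** If `u ∈ A_p(ℬ) ∩ RH_δ(ℬ)` for some `1 < p, δ < ∞`, then
`u^δ ∈ A_q(ℬ)` with `[u^δ]_{A_q} ≤ [u]_{RH_δ}^δ [u]_{A_p}^δ`, where `q = 1 + δ(p-1)`. -/
theorem statement5
    {Y : Type*} [MeasurableSpace Y] (μ : Measure Y) [SigmaFinite μ]
    (ℬ : Set (Set Y)) (hmeas : ∀ B ∈ ℬ, MeasurableSet B)
    (hℬ : ∀ B ∈ ℬ, 0 < μ B ∧ μ B < ⊤)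
    (p δ : ℝ) (hp : 1 < p) (hδ : 1 < δ)
    (u : Y → ℝ≥0∞) (hu : JNW.MemAp μ ℬ p u) (hrh : JNW.MemRH μ ℬ δ u) :
    JNW.MemAp μ ℬ (1 + δ * (p - 1)) (fun x => u x ^ δ) ∧
    JNW.apConst μ ℬ (1 + δ * (p - 1)) (fun x => u x ^ δ) ≤
      JNW.rhConst μ ℬ δ u ^ δ * JNW.apConst μ ℬ p u ^ δ := by
  obtain ⟨humeas, huint, huK⟩ := hu
  obtain ⟨-, hrint, hrK⟩ := hrh
  have hp1 : (0:ℝ) < p - 1 := by linarith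
  have hδ0 : (0:ℝ) < δ := by linarith
  have hpne : p ≠ 0 := by positivity
  have hp1ne : p - 1 ≠ 0 := hp1.ne'
  set q : ℝ := 1 + δ * (p - 1) with hqdef
  have hq1 : q - 1 = δ * (p - 1) := by ring
  have hq0 : (0:ℝ) < q - 1 := by rw [hq1]; positivity
  have hqne : q ≠ 0 := by nlinarith
  have hcp : JNW.conj p / p = 1 / (p - 1) := by
    unfold JNW.conj; field_simp
  have hcq : JNW.conj q / q = 1 / (q - 1) := by
    unfold JNW.conj; field_simp
  have hpc : p / JNW.conj p = p - 1 := by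
    unfold JNW.conj; field_simp
  have hqc : q / JNW.conj q = q - 1 := by
    unfold JNW.conj; field_simp
  have hexp : δ * -(JNW.conj q / q) = -(JNW.conj p / p) := by
    rw [hcp, hcq, hq1]; field_simp
  set r := JNW.rhConst μ ℬ δ u with hr
  set K := JNW.apConst μ ℬ p u with hK
  have hrT : r ≠ ⊤ := hrK.ne
  -- per-B reverse Hölder bound
  have hc : ∀ B ∈ ℬ, (JNW.lavg μ B fun x => u x ^ δ) ≤
      r ^ δ * (JNW.lavg μ B u) ^ δ := by
    intro B hB
    set a := JNW.lavg μ B u with ha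
    set c := JNW.lavg μ B fun x => u x ^ δ with hcc
    have haT : a < ⊤ := ENNReal.div_lt_top (huint B hB).ne (hℬ B hB).1.ne'
    have h1 : c ^ (1 / δ) / a ≤ r := by
      rw [hr, JNW.rhConst]
      exact le_iSup₂_of_le B hB le_rfl
    have hca : c ^ (1 / δ) ≤ r * a := by
      rcases eq_or_ne a 0 with h0 | h0
      · rcases eq_or_ne (c ^ (1 / δ)) 0 with hc0 | hc0
        · rw [one_div] at hc0; simp [hc0]
        · exfalso
          rw [h0, ENNReal.div_zero hc0] at h1
          exact hrK.not_ge h1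
      · exact (ENNReal.div_le_iff_le_mul (Or.inl h0) (Or.inl haT.ne)).mp h1
    have h3 : (c ^ (1 / δ)) ^ δ ≤ (r * a) ^ δ :=
      ENNReal.rpow_le_rpow hca hδ0.le
    rwa [← ENNReal.rpow_mul, one_div, inv_mul_cancel₀ hδ0.ne', ENNReal.rpow_one,
      ENNReal.mul_rpow_of_nonneg _ _ hδ0.le] at h3
  -- per-B A_q bound
  have key : ∀ B ∈ ℬ,
      JNW.lavg μ B (fun x => u x ^ δ) *
        (JNW.lavg μ B fun x => (u x ^ δ) ^ (-(JNW.conj q / q))) ^ (q / JNW.conj q)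
      ≤ r ^ δ * K ^ δ := by
    intro B hB
    set a := JNW.lavg μ B u with ha
    set b := JNW.lavg μ B fun x => u x ^ (-(JNW.conj p / p)) with hb
    set c := JNW.lavg μ B fun x => u x ^ δ with hcc
    have hba : (JNW.lavg μ B fun x => (u x ^ δ) ^ (-(JNW.conj q / q))) = b := by
      rw [hb, JNW.lavg, JNW.lavg]
      congr 1
      refine lintegral_congr fun x => ?_
      rw [← ENNReal.rpow_mul, hexp]
    have h2 : a * b ^ (p / JNW.conj p) ≤ K := by
      rw [hK, JNW.apConst]
      exact le_iSup₂_of_le B hB le_rfl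
    rw [hpc] at h2
    have hbpow : b ^ (q / JNW.conj q) = (b ^ (p - 1)) ^ δ := by
      rw [hqc, hq1, mul_comm, ENNReal.rpow_mul]
    calc c * (JNW.lavg μ B fun x => (u x ^ δ) ^ (-(JNW.conj q / q))) ^ (q / JNW.conj q)
        = c * (b ^ (p - 1)) ^ δ := by rw [hba, hbpow]
      _ ≤ (r ^ δ * a ^ δ) * (b ^ (p - 1)) ^ δ := mul_le_mul_left (hc B hB) _
      _ = r ^ δ * (a * b ^ (p - 1)) ^ δ := by
          rw [ENNReal.mul_rpow_of_nonneg _ _ hδ0.le, mul_assoc]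
      _ ≤ r ^ δ * K ^ δ := by
          exact mul_le_mul_right (ENNReal.rpow_le_rpow h2 hδ0.le) _
  have hbound : JNW.apConst μ ℬ q (fun x => u x ^ δ) ≤ r ^ δ * K ^ δ := by
    rw [JNW.apConst]
    exact iSup₂_le key
  have hfin : r ^ δ * K ^ δ < ⊤ :=
    ENNReal.mul_lt_top (ENNReal.rpow_lt_top_of_nonneg hδ0.le hrT)
      (ENNReal.rpow_lt_top_of_nonneg hδ0.le huK.ne)
  refine ⟨⟨?_, ?_, lt_of_le_of_lt hbound hfin⟩, hbound⟩
  · exact humeas.pow_const δ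
  · intro B hB
    have h := hc B hB
    have haT : JNW.lavg μ B u < ⊤ :=
      ENNReal.div_lt_top (huint B hB).ne (hℬ B hB).1.ne'
    have heq : ∫⁻ x in B, u x ^ δ ∂μ = (JNW.lavg μ B fun x => u x ^ δ) * μ B := by
      rw [JNW.lavg, ENNReal.div_mul_cancel (hℬ B hB).1.ne' (hℬ B hB).2.ne]
    rw [heq]
    exact ENNReal.mul_lt_top
      (lt_of_le_of_lt h (ENNReal.mul_lt_top
        (ENNReal.rpow_lt_top_of_nonneg hδ0.le hrT)
        (ENNReal.rpow_lt_top_of_nonneg hδ0.le haT.ne)))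
      (hℬ B hB).2
end
end
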